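/- For partial functions f : α →. β and g : β →. α with the pointwise refinement order, the pair (f, g) is an adjunction f ⊣ g (i.e. PFun.id α ≤ g.comp f and f.comp g ≤ PFun.id β) if and only if there exists a function φ : α → β such that f = PFun.lift φ and, for all a : α and b : β, a ∈ g b ↔ φ a = b. (In particular f is total, φ is injective, and g is the partial inverse of φ defined exactly on the range of φ.) -/

import Mathlib

universe u

/-- `f ≤ g` pointwise: every value of `f a` is a value of `g a`. -/
def PFunLE {α β : Type u} (f g : α →. β) : Prop := ∀ a, f a ≤ g a

/-- `f` is total: defined everywhere. -/
def PFun.Total {α β : Type u} (f : α →. β) : Prop := ∀ a, (f a).Dom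

/-- `f` is injective on its domain. -/
def PFun.InjOnDom {α β : Type u} (f : α →. β) : Prop :=
  ∀ ⦃a a' : α⦄ ⦃b : β⦄, b ∈ f a → b ∈ f a' → a = a'

/-- `f ⊣ g` for partial functions iff `f = PFun.lift φ` for some `φ` with
`a ∈ g b ↔ φ a = b`. -/
theorem stmt11 {α β : Type u} (f : α →. β) (g : β →. α) :
    (PFunLE (PFun.id α) (g.comp f) ∧ PFunLE (f.comp g) (PFun.id β)) ↔
      ∃ φ : α → β, f = PFun.lift φ ∧ ∀ (a : α) (b : β), a ∈ g b ↔ φ a = b := by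
  constructor
  · rintro ⟨h1, h2⟩
    have key : ∀ a : α, ∃ b, b ∈ f a ∧ a ∈ g b := by
      intro a
      have := h1 a a (by rw [PFun.id_apply]; exact Part.mem_some a)
      rw [PFun.comp_apply] at this; replace this := Part.mem_bind_iff.1 this
      obtain ⟨b, hb, hb'⟩ := this
      exact ⟨b, hb, hb'⟩
    choose φ hφf hφg using key
    have hid : ∀ (b c : β), c ∈ (f.comp g) b → c = b := by
      intro b c hc
      have := h2 b c hc
      rwa [PFun.id_apply, Part.mem_some_iff] at this
    refine ⟨φ, ?_, ?_⟩
    · funext a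
      apply Part.ext
      intro b
      simp only [PFun.lift, Part.mem_some_iff]
      constructor
      · intro hb
        exact hid (φ a) b (by rw [PFun.comp_apply]; exact Part.mem_bind_iff.2 ⟨a, hφg a, hb⟩)
      · rintro rfl; exact hφf a
    · intro a b
      constructor
      · intro hab
        exact hid b (φ a) (by rw [PFun.comp_apply]; exact Part.mem_bind_iff.2 ⟨a, hab, hφf a⟩)
      · rintro rfl; exact hφg a
  · rintro ⟨φ, rfl, hg⟩
    constructor
    · intro a x hx
      rw [PFun.id_apply, Part.mem_some_iff] at hx
      subst hx
      rw [PFun.comp_apply]; refine Part.mem_bind_iff.2 ?_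
      exact ⟨φ x, by simp [PFun.lift], (hg x (φ x)).2 rfl⟩
    · intro b x hx
      rw [PFun.comp_apply] at hx; replace hx := Part.mem_bind_iff.1 hx
      obtain ⟨a, ha, hx⟩ := hx
      simp only [PFun.lift, Part.mem_some_iff] at hx
      rw [PFun.id_apply, Part.mem_some_iff]
      rw [hx, (hg a b).1 ha]
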